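/- For every γ ∈ (0,1) and σ > 0, the second moments under GPD(γ,σ) of the estimating function ψ satisfy: ∫₀^∞ ψ_γ(x;γ,σ)² f_{γ,σ}(x) dx = (8γ⁵ − 148γ⁴ + 918γ³ − 2587γ² + 3416γ − 1719) σ² / ( 12(γ−3)²(γ−2)⁴(2γ−3)³ ), ∫₀^∞ ψ_γ(x;γ,σ) ψ_σ(x;γ,σ) f_{γ,σ}(x) dx = ( γ(γ(−4(γ−15)γ − 285) + 548) − 369 ) σ / ( 12(γ−2)³(2γ² − 9γ + 9)² ), and ∫₀^∞ ψ_σ(x;γ,σ)² f_{γ,σ}(x) dx = ( γ(2γ−17) + 29 ) / ( 12(γ−3)(γ−2)²(2γ−3) ). -/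

import Mathlib

open Real MeasureTheory Filter Set

/-- Density of GPD(γ,σ). -/
noncomputable def gpdPdf (γ σ x : ℝ) : ℝ := σ⁻¹ * (1 + γ * x / σ) ^ (-1 / γ - 1 : ℝ)

/-- The γ-component of the estimating function ψ. -/
noncomputable def psiGamma (γ σ x : ℝ) : ℝ :=
  σ / (2 * (γ - 2) ^ 2) +
    ((γ - 1) ^ 2 * γ ^ 2)⁻¹ *
      (-(γ ^ 2 * σ) +
        (σ / (σ + γ * x)) ^ (1 / γ : ℝ) *
          (γ * (γ * σ + (2 * γ - 1) * x) -
            (γ - 1) * (σ + γ * x) * Real.log (1 + γ * x / σ)))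

/-- The σ-component of the estimating function ψ. -/
noncomputable def psiSigma (γ σ x : ℝ) : ℝ :=
  -(1 / (2 * (γ - 2))) -
    ((γ - 1) * σ)⁻¹ * ((σ + x) * (σ / (σ + γ * x)) ^ (1 / γ : ℝ) - σ)

lemma tendsto_aux (c : ℝ) (hc : 0 < c) (k : ℕ) :
    Tendsto (fun t : ℝ => t ^ (-c) * Real.log t ^ k) atTop (nhds 0) := by
  have h := (isLittleO_log_rpow_rpow_atTop (k : ℝ) hc).tendsto_div_nhds_zero
  refine h.congr' ?_
  filter_upwards [eventually_ge_atTop 1] with t ht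
  have h0 : (0:ℝ) < t := lt_of_lt_of_le one_pos ht
  rw [Real.rpow_natCast, div_eq_mul_inv, ← Real.rpow_neg h0.le, mul_comm]

lemma T_tendsto {γ σ : ℝ} (hγ : 0 < γ) (hσ : 0 < σ) :
    Tendsto (fun x : ℝ => 1 + γ * x / σ) atTop atTop := by
  apply tendsto_atTop_add_const_left
  exact (Tendsto.const_mul_atTop hγ tendsto_id).atTop_div_const hσ

lemma hTd (γ σ : ℝ) (x : ℝ) : HasDerivAt (fun x : ℝ => 1 + γ * x / σ) (γ / σ) x := by
  simpa using (((hasDerivAt_id x).const_mul γ).div_const σ).const_add 1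

lemma baseT {γ σ : ℝ} (hγ : 0 < γ) (hσ : 0 < σ) (e : ℝ) (he : e < 0) (k : ℕ) :
    Tendsto (fun x : ℝ => (1 + γ * x / σ) ^ e * Real.log (1 + γ * x / σ) ^ k) atTop (nhds 0) := by
  have := (tendsto_aux (-e) (by linarith) k).comp (T_tendsto hγ hσ)
  simpa [Function.comp_def, neg_neg] using this

lemma Tpos {γ σ : ℝ} (hγ : 0 < γ) (hσ : 0 < σ) {x : ℝ} (hx : 0 ≤ x) :
    0 < 1 + γ * x / σ := by
  have : 0 ≤ γ * x / σ := by positivity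
  linarith

lemma J0 {γ σ : ℝ} (hγ : 0 < γ) (hσ : 0 < σ) (β : ℝ) (hβ : 1 < β) :
    IntegrableOn (fun x : ℝ => (1 + γ * x / σ) ^ (-β)) (Set.Ioi 0) volume ∧
    ∫ x in Set.Ioi (0:ℝ), (1 + γ * x / σ) ^ (-β) = σ / (γ * (β - 1)) := by
  have hb : (1:ℝ) - β ≠ 0 := by intro h; linarith [h]
  have hd : ∀ x ∈ Ici (0:ℝ), HasDerivAt
      (fun x => σ / (γ * (1 - β)) * (1 + γ * x / σ) ^ ((1:ℝ) - β))
      ((1 + γ * x / σ) ^ (-β)) x := by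
    intro x hx
    have ht : 0 < 1 + γ * x / σ := Tpos hγ hσ hx
    have h := ((hTd γ σ x).rpow_const (p := (1:ℝ) - β) (Or.inl ht.ne')).const_mul
      (σ / (γ * (1 - β)))
    refine h.congr_deriv ?_
    rw [show (1:ℝ) - β - 1 = -β by ring]
    generalize (1 + γ * x / σ : ℝ) = t at ht ⊢
    field_simp
  have hpos : ∀ x ∈ Ioi (0:ℝ), 0 ≤ (1 + γ * x / σ) ^ (-β) := fun x hx =>
    Real.rpow_nonneg (Tpos hγ hσ (le_of_lt hx)).le _
  have htend : Tendsto (fun x : ℝ => σ / (γ * (1 - β)) * (1 + γ * x / σ) ^ ((1:ℝ) - β))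
      atTop (nhds 0) := by
    have t0 : Tendsto (fun x : ℝ => (1 + γ * x / σ) ^ ((1:ℝ) - β)) atTop (nhds 0) := by
      simpa using baseT hγ hσ (1 - β) (by linarith) 0
    simpa using t0.const_mul (σ / (γ * (1 - β)))
  refine ⟨integrableOn_Ioi_deriv_of_nonneg' hd hpos htend, ?_⟩
  rw [integral_Ioi_of_hasDerivAt_of_nonneg' hd hpos htend]
  rw [show γ * (0:ℝ) / σ = 0 by ring, show ((1:ℝ) + 0) = 1 by norm_num, Real.one_rpow,
    show γ * (β - 1) = -(γ * (1 - β)) by ring, div_neg]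
  field_simp
  ring

lemma J1 {γ σ : ℝ} (hγ : 0 < γ) (hσ : 0 < σ) (β : ℝ) (hβ : 1 < β) :
    IntegrableOn (fun x : ℝ => (1 + γ * x / σ) ^ (-β) * Real.log (1 + γ * x / σ)) (Set.Ioi 0) volume ∧
    ∫ x in Set.Ioi (0:ℝ), (1 + γ * x / σ) ^ (-β) * Real.log (1 + γ * x / σ)
      = σ / (γ * (β - 1) ^ 2) := by
  have hb : (1:ℝ) - β ≠ 0 := by intro h; linarith [h]
  have hd : ∀ x ∈ Ici (0:ℝ), HasDerivAt (fun x => σ / γ * ((1 + γ * x / σ) ^ ((1:ℝ) - β) *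
        (Real.log (1 + γ * x / σ) / (1 - β) - 1 / (1 - β) ^ 2)))
      ((1 + γ * x / σ) ^ (-β) * Real.log (1 + γ * x / σ)) x := by
    intro x hx
    have ht : 0 < 1 + γ * x / σ := Tpos hγ hσ hx
    have hr := (hTd γ σ x).rpow_const (p := (1:ℝ) - β) (Or.inl ht.ne')
    have hl := (hTd γ σ x).log ht.ne'
    have h := (hr.mul ((hl.div_const (1 - β)).sub_const (1 / (1 - β) ^ 2))).const_mul (σ / γ)
    refine h.congr_deriv ?_
    rw [show (1:ℝ) - β - 1 = -β by ring,
      show ((1 + γ * x / σ) : ℝ) ^ ((1:ℝ) - β) = (1 + γ * x / σ) * (1 + γ * x / σ) ^ (-β) by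
        rw [show (1:ℝ) - β = 1 + -β by ring, Real.rpow_add ht, Real.rpow_one]]
    generalize (1 + γ * x / σ : ℝ) = t at ht ⊢
    field_simp
    ring
  have hpos : ∀ x ∈ Ioi (0:ℝ), 0 ≤ (1 + γ * x / σ) ^ (-β) * Real.log (1 + γ * x / σ) := by
    intro x hx
    have hx0 : (0:ℝ) ≤ x := le_of_lt hx
    have ht : 0 < 1 + γ * x / σ := Tpos hγ hσ hx0
    have hl : 0 ≤ Real.log (1 + γ * x / σ) := Real.log_nonneg (by
      have : 0 ≤ γ * x / σ := by positivity
      linarith)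
    exact mul_nonneg (Real.rpow_nonneg ht.le _) hl
  have t0 : Tendsto (fun x : ℝ => (1 + γ * x / σ) ^ ((1:ℝ) - β)) atTop (nhds 0) := by
    simpa using baseT hγ hσ (1 - β) (by linarith) 0
  have t1 : Tendsto (fun x : ℝ => (1 + γ * x / σ) ^ ((1:ℝ) - β) * Real.log (1 + γ * x / σ))
      atTop (nhds 0) := by
    simpa using baseT hγ hσ (1 - β) (by linarith) 1
  have htend : Tendsto (fun x : ℝ => σ / γ * ((1 + γ * x / σ) ^ ((1:ℝ) - β) *
      (Real.log (1 + γ * x / σ) / (1 - β) - 1 / (1 - β) ^ 2))) atTop (nhds 0) := by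
    have h := ((t1.const_mul (1 / (1 - β))).sub (t0.const_mul (1 / (1 - β) ^ 2))).const_mul (σ / γ)
    rw [show σ / γ * (1 / (1 - β) * 0 - 1 / (1 - β) ^ 2 * 0) = (0:ℝ) by ring] at h
    exact h.congr (fun x => by ring)
  refine ⟨integrableOn_Ioi_deriv_of_nonneg' hd hpos htend, ?_⟩
  rw [integral_Ioi_of_hasDerivAt_of_nonneg' hd hpos htend]
  rw [show γ * (0:ℝ) / σ = 0 by ring, show ((1:ℝ) + 0) = 1 by norm_num, Real.one_rpow,
    Real.log_one, show γ * (β - 1) ^ 2 = γ * (1 - β) ^ 2 by ring]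
  field_simp
  ring

lemma J2 {γ σ : ℝ} (hγ : 0 < γ) (hσ : 0 < σ) (β : ℝ) (hβ : 1 < β) :
    IntegrableOn (fun x : ℝ => (1 + γ * x / σ) ^ (-β) * Real.log (1 + γ * x / σ) ^ 2)
      (Set.Ioi 0) volume ∧
    ∫ x in Set.Ioi (0:ℝ), (1 + γ * x / σ) ^ (-β) * Real.log (1 + γ * x / σ) ^ 2
      = 2 * σ / (γ * (β - 1) ^ 3) := by
  have hb : (1:ℝ) - β ≠ 0 := by intro h; linarith [h]
  have hd : ∀ x ∈ Ici (0:ℝ), HasDerivAt (fun x => σ / γ * ((1 + γ * x / σ) ^ ((1:ℝ) - β) *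
        (Real.log (1 + γ * x / σ) ^ 2 / (1 - β) - 2 * Real.log (1 + γ * x / σ) / (1 - β) ^ 2
          + 2 / (1 - β) ^ 3)))
      ((1 + γ * x / σ) ^ (-β) * Real.log (1 + γ * x / σ) ^ 2) x := by
    intro x hx
    have ht : 0 < 1 + γ * x / σ := Tpos hγ hσ hx
    have hr := (hTd γ σ x).rpow_const (p := (1:ℝ) - β) (Or.inl ht.ne')
    have hl := (hTd γ σ x).log ht.ne'
    have h := (hr.mul ((((hl.pow 2).div_const (1 - β)).sub
        ((hl.const_mul 2).div_const ((1 - β) ^ 2))).add_const (2 / (1 - β) ^ 3))).const_mul (σ / γ)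
    refine h.congr_deriv ?_
    simp only [Pi.sub_apply, Pi.pow_apply]
    rw [show (1:ℝ) - β - 1 = -β by ring,
      show ((1 + γ * x / σ) : ℝ) ^ ((1:ℝ) - β) = (1 + γ * x / σ) * (1 + γ * x / σ) ^ (-β) by
        rw [show (1:ℝ) - β = 1 + -β by ring, Real.rpow_add ht, Real.rpow_one]]
    generalize (1 + γ * x / σ : ℝ) = t at ht ⊢
    push_cast
    field_simp
    ring
  have hpos : ∀ x ∈ Ioi (0:ℝ), 0 ≤ (1 + γ * x / σ) ^ (-β) * Real.log (1 + γ * x / σ) ^ 2 := by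
    intro x hx
    have ht : 0 < 1 + γ * x / σ := Tpos hγ hσ (le_of_lt hx)
    exact mul_nonneg (Real.rpow_nonneg ht.le _) (sq_nonneg _)
  have t0 : Tendsto (fun x : ℝ => (1 + γ * x / σ) ^ ((1:ℝ) - β)) atTop (nhds 0) := by
    simpa using baseT hγ hσ (1 - β) (by linarith) 0
  have t1 : Tendsto (fun x : ℝ => (1 + γ * x / σ) ^ ((1:ℝ) - β) * Real.log (1 + γ * x / σ))
      atTop (nhds 0) := by
    simpa using baseT hγ hσ (1 - β) (by linarith) 1
  have t2 : Tendsto (fun x : ℝ => (1 + γ * x / σ) ^ ((1:ℝ) - β) * Real.log (1 + γ * x / σ) ^ 2)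
      atTop (nhds 0) := by
    simpa using baseT hγ hσ (1 - β) (by linarith) 2
  have htend : Tendsto (fun x : ℝ => σ / γ * ((1 + γ * x / σ) ^ ((1:ℝ) - β) *
      (Real.log (1 + γ * x / σ) ^ 2 / (1 - β) - 2 * Real.log (1 + γ * x / σ) / (1 - β) ^ 2
        + 2 / (1 - β) ^ 3))) atTop (nhds 0) := by
    have h := (((t2.const_mul (1 / (1 - β))).sub (t1.const_mul (2 / (1 - β) ^ 2))).add
        (t0.const_mul (2 / (1 - β) ^ 3))).const_mul (σ / γ)
    rw [show σ / γ * (1 / (1 - β) * 0 - 2 / (1 - β) ^ 2 * 0 + 2 / (1 - β) ^ 3 * 0) = (0:ℝ)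
      by ring] at h
    exact h.congr (fun x => by ring)
  refine ⟨integrableOn_Ioi_deriv_of_nonneg' hd hpos htend, ?_⟩
  rw [integral_Ioi_of_hasDerivAt_of_nonneg' hd hpos htend]
  rw [show γ * (0:ℝ) / σ = 0 by ring, show ((1:ℝ) + 0) = 1 by norm_num, Real.one_rpow,
    Real.log_one, show γ * (β - 1) ^ 3 = -(γ * (1 - β) ^ 3) by ring, div_neg]
  field_simp
  ring


set_option maxHeartbeats 4000000 in
lemma master {γ σ : ℝ} (hγ0 : 0 < γ) (hγ1 : γ < 1) (hσ : 0 < σ)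
    (A P Q R A' P' Q' R' : ℝ) :
    ∫ x in Set.Ioi (0:ℝ),
      (A + (1 + γ * x / σ) ^ (-(1/γ)) * (P + Q * (1 + γ * x / σ) + R * (1 + γ * x / σ) * Real.log (1 + γ * x / σ))) * (A' + (1 + γ * x / σ) ^ (-(1/γ)) * (P' + Q' * (1 + γ * x / σ) + R' * (1 + γ * x / σ) * Real.log (1 + γ * x / σ))) * (σ⁻¹ * (1 + γ * x / σ) ^ (-(1/γ) - 1))
    = A * A' + (A * P' + A' * P) / 2 + (A * Q' + A' * Q) / (2 - γ)
      + (A * R' + A' * R) * γ / (2 - γ) ^ 2 + P * P' / 3 + (P * Q' + Q * P') / (3 - γ)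
      + Q * Q' / (3 - 2 * γ) + (P * R' + R * P') * γ / (3 - γ) ^ 2
      + (Q * R' + R * Q') * γ / (3 - 2 * γ) ^ 2 + R * R' * (2 * γ ^ 2) / (3 - 2 * γ) ^ 3 := by
  have hg : (1:ℝ) < 1/γ := by rw [lt_div_iff₀ hγ0]; linarith
  have h2g : (1:ℝ) < 2/γ := by rw [lt_div_iff₀ hγ0]; linarith
  have h3g : (2:ℝ) < 3/γ := by rw [lt_div_iff₀ hγ0]; linarith
  obtain ⟨i0, v0⟩ := J0 hγ0 hσ (1/γ + 1) (by linarith)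
  obtain ⟨i1, v1⟩ := J0 hγ0 hσ (2/γ + 1) (by linarith)
  obtain ⟨i2, v2⟩ := J0 hγ0 hσ (2/γ) (by linarith)
  obtain ⟨i3, v3⟩ := J1 hγ0 hσ (2/γ) (by linarith)
  obtain ⟨i4, v4⟩ := J0 hγ0 hσ (3/γ + 1) (by linarith)
  obtain ⟨i5, v5⟩ := J0 hγ0 hσ (3/γ) (by linarith)
  obtain ⟨i6, v6⟩ := J0 hγ0 hσ (3/γ - 1) (by linarith)
  obtain ⟨i7, v7⟩ := J1 hγ0 hσ (3/γ) (by linarith)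
  obtain ⟨i8, v8⟩ := J1 hγ0 hσ (3/γ - 1) (by linarith)
  obtain ⟨i9, v9⟩ := J2 hγ0 hσ (3/γ - 1) (by linarith)
  have heq : Set.EqOn (fun x : ℝ => (A + (1 + γ * x / σ) ^ (-(1/γ)) * (P + Q * (1 + γ * x / σ) + R * (1 + γ * x / σ) * Real.log (1 + γ * x / σ))) * (A' + (1 + γ * x / σ) ^ (-(1/γ)) * (P' + Q' * (1 + γ * x / σ) + R' * (1 + γ * x / σ) * Real.log (1 + γ * x / σ))) * (σ⁻¹ * (1 + γ * x / σ) ^ (-(1/γ) - 1))) (fun x : ℝ => (σ⁻¹ * (A * A') * ((1 + γ * x / σ) ^ (-(1/γ + 1))) + (σ⁻¹ * (A * P' + A' * P) * ((1 + γ * x / σ) ^ (-(2/γ + 1))) + (σ⁻¹ * (A * Q' + A' * Q) * ((1 + γ * x / σ) ^ (-(2/γ))) + (σ⁻¹ * (A * R' + A' * R) * ((1 + γ * x / σ) ^ (-(2/γ)) * Real.log (1 + γ * x / σ)) + (σ⁻¹ * (P * P') * ((1 + γ * x / σ) ^ (-(3/γ + 1))) + (σ⁻¹ * (P * Q' + Q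 * P') * ((1 + γ * x / σ) ^ (-(3/γ))) + (σ⁻¹ * (Q * Q') * ((1 + γ * x / σ) ^ (-(3/γ - 1))) + (σ⁻¹ * (P * R' + R * P') * ((1 + γ * x / σ) ^ (-(3/γ)) * Real.log (1 + γ * x / σ)) + (σ⁻¹ * (Q * R' + R * Q') * ((1 + γ * x / σ) ^ (-(3/γ - 1)) * Real.log (1 + γ * x / σ)) + σ⁻¹ * (R * R') * ((1 + γ * x / σ) ^ (-(3/γ - 1)) * Real.log (1 + γ * x / σ) ^ 2))))))))))) (Set.Ioi 0) := by
    intro x hx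
    have ht : 0 < 1 + γ * x / σ := Tpos hγ0 hσ (le_of_lt hx)
    simp only
    rw [show (-(1/γ) - 1 : ℝ) = -(1/γ) + (-1) by ring, show (-(1/γ + 1) : ℝ) = -(1/γ) + (-1) by ring, show (-(2/γ + 1) : ℝ) = -(1/γ) + (-(1/γ) + (-1)) by ring, show (-(2/γ) : ℝ) = -(1/γ) + (-(1/γ)) by ring, show (-(3/γ + 1) : ℝ) = -(1/γ) + (-(1/γ) + (-(1/γ) + (-1))) by ring, show (-(3/γ) : ℝ) = -(1/γ) + (-(1/γ) + (-(1/γ))) by ring, show (-(3/γ - 1) : ℝ) = -(1/γ) + (-(1/γ) + (-(1/γ) + 1)) by ring]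
    simp only [Real.rpow_add ht, Real.rpow_neg_one, Real.rpow_one]
    generalize (1 + γ * x / σ : ℝ) = t at ht ⊢
    field_simp
    ring
  rw [setIntegral_congr_fun measurableSet_Ioi heq]
  have hA0 : Integrable (fun x : ℝ => σ⁻¹ * (A * A') * ((1 + γ * x / σ) ^ (-(1/γ + 1)))) (volume.restrict (Set.Ioi 0)) := by exact i0.const_mul _
  have hA1 : Integrable (fun x : ℝ => σ⁻¹ * (A * P' + A' * P) * ((1 + γ * x / σ) ^ (-(2/γ + 1)))) (volume.restrict (Set.Ioi 0)) := by exact i1.const_mul _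
  have hA2 : Integrable (fun x : ℝ => σ⁻¹ * (A * Q' + A' * Q) * ((1 + γ * x / σ) ^ (-(2/γ)))) (volume.restrict (Set.Ioi 0)) := by exact i2.const_mul _
  have hA3 : Integrable (fun x : ℝ => σ⁻¹ * (A * R' + A' * R) * ((1 + γ * x / σ) ^ (-(2/γ)) * Real.log (1 + γ * x / σ))) (volume.restrict (Set.Ioi 0)) := by exact i3.const_mul _
  have hA4 : Integrable (fun x : ℝ => σ⁻¹ * (P * P') * ((1 + γ * x / σ) ^ (-(3/γ + 1)))) (volume.restrict (Set.Ioi 0)) := by exact i4.const_mul _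
  have hA5 : Integrable (fun x : ℝ => σ⁻¹ * (P * Q' + Q * P') * ((1 + γ * x / σ) ^ (-(3/γ)))) (volume.restrict (Set.Ioi 0)) := by exact i5.const_mul _
  have hA6 : Integrable (fun x : ℝ => σ⁻¹ * (Q * Q') * ((1 + γ * x / σ) ^ (-(3/γ - 1)))) (volume.restrict (Set.Ioi 0)) := by exact i6.const_mul _
  have hA7 : Integrable (fun x : ℝ => σ⁻¹ * (P * R' + R * P') * ((1 + γ * x / σ) ^ (-(3/γ)) * Real.log (1 + γ * x / σ))) (volume.restrict (Set.Ioi 0)) := by exact i7.const_mul _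
  have hA8 : Integrable (fun x : ℝ => σ⁻¹ * (Q * R' + R * Q') * ((1 + γ * x / σ) ^ (-(3/γ - 1)) * Real.log (1 + γ * x / σ))) (volume.restrict (Set.Ioi 0)) := by exact i8.const_mul _
  have hA9 : Integrable (fun x : ℝ => σ⁻¹ * (R * R') * ((1 + γ * x / σ) ^ (-(3/γ - 1)) * Real.log (1 + γ * x / σ) ^ 2)) (volume.restrict (Set.Ioi 0)) := by exact i9.const_mul _
  have hS9 : Integrable (fun x : ℝ => σ⁻¹ * (R * R') * ((1 + γ * x / σ) ^ (-(3/γ - 1)) * Real.log (1 + γ * x / σ) ^ 2)) (volume.restrict (Set.Ioi 0)) := by exact hA9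
  have hS8 : Integrable (fun x : ℝ => (σ⁻¹ * (Q * R' + R * Q') * ((1 + γ * x / σ) ^ (-(3/γ - 1)) * Real.log (1 + γ * x / σ)) + σ⁻¹ * (R * R') * ((1 + γ * x / σ) ^ (-(3/γ - 1)) * Real.log (1 + γ * x / σ) ^ 2))) (volume.restrict (Set.Ioi 0)) := by exact hA8.add hS9
  have hS7 : Integrable (fun x : ℝ => (σ⁻¹ * (P * R' + R * P') * ((1 + γ * x / σ) ^ (-(3/γ)) * Real.log (1 + γ * x / σ)) + (σ⁻¹ * (Q * R' + R * Q') * ((1 + γ * x / σ) ^ (-(3/γ - 1)) * Real.log (1 + γ * x / σ)) + σ⁻¹ * (R * R') * ((1 + γ * x / σ) ^ (-(3/γ - 1)) * Real.log (1 + γ * x / σ) ^ 2)))) (volume.restrict (Set.Ioi 0)) := by exact hA7.add hS8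
  have hS6 : Integrable (fun x : ℝ => (σ⁻¹ * (Q * Q') * ((1 + γ * x / σ) ^ (-(3/γ - 1))) + (σ⁻¹ * (P * R' + R * P') * ((1 + γ * x / σ) ^ (-(3/γ)) * Real.log (1 + γ * x / σ)) + (σ⁻¹ * (Q * R' + R * Q') * ((1 + γ * x / σ) ^ (-(3/γ - 1)) * Real.log (1 + γ * x / σ)) + σ⁻¹ * (R * R') * ((1 + γ * x / σ) ^ (-(3/γ - 1)) * Real.log (1 + γ * x / σ) ^ 2))))) (volume.restrict (Set.Ioi 0)) := by exact hA6.add hS7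
  have hS5 : Integrable (fun x : ℝ => (σ⁻¹ * (P * Q' + Q * P') * ((1 + γ * x / σ) ^ (-(3/γ))) + (σ⁻¹ * (Q * Q') * ((1 + γ * x / σ) ^ (-(3/γ - 1))) + (σ⁻¹ * (P * R' + R * P') * ((1 + γ * x / σ) ^ (-(3/γ)) * Real.log (1 + γ * x / σ)) + (σ⁻¹ * (Q * R' + R * Q') * ((1 + γ * x / σ) ^ (-(3/γ - 1)) * Real.log (1 + γ * x / σ)) + σ⁻¹ * (R * R') * ((1 + γ * x / σ) ^ (-(3/γ - 1)) * Real.log (1 + γ * x / σ) ^ 2)))))) (volume.restrict (Set.Ioi 0)) := by exact hA5.add hS6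
  have hS4 : Integrable (fun x : ℝ => (σ⁻¹ * (P * P') * ((1 + γ * x / σ) ^ (-(3/γ + 1))) + (σ⁻¹ * (P * Q' + Q * P') * ((1 + γ * x / σ) ^ (-(3/γ))) + (σ⁻¹ * (Q * Q') * ((1 + γ * x / σ) ^ (-(3/γ - 1))) + (σ⁻¹ * (P * R' + R * P') * ((1 + γ * x / σ) ^ (-(3/γ)) * Real.log (1 + γ * x / σ)) + (σ⁻¹ * (Q * R' + R * Q') * ((1 + γ * x / σ) ^ (-(3/γ - 1)) * Real.log (1 + γ * x / σ)) + σ⁻¹ * (R * R') * ((1 + γ * x / σ) ^ (-(3/γ - 1)) * Real.log (1 + γ * x / σ) ^ 2))))))) (volume.restrict (Set.Ioi 0)) := by exact hA4.add hS5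
  have hS3 : Integrable (fun x : ℝ => (σ⁻¹ * (A * R' + A' * R) * ((1 + γ * x / σ) ^ (-(2/γ)) * Real.log (1 + γ * x / σ)) + (σ⁻¹ * (P * P') * ((1 + γ * x / σ) ^ (-(3/γ + 1))) + (σ⁻¹ * (P * Q' + Q * P') * ((1 + γ * x / σ) ^ (-(3/γ))) + (σ⁻¹ * (Q * Q') * ((1 + γ * x / σ) ^ (-(3/γ - 1))) + (σ⁻¹ * (P * R' + R * P') * ((1 + γ * x / σ) ^ (-(3/γ)) * Real.log (1 + γ * x / σ)) + (σ⁻¹ * (Q * R' + R * Q') * ((1 + γ * x / σ) ^ (-(3/γ - 1)) * Real.log (1 + γ * x / σ)) + σ⁻¹ * (R * R') * ((1 + γ * x / σ) ^ (-(3/γ - 1)) * Real.log (1 + γ * x / σ) ^ 2)))))))) (volume.restrict (Set.Ioi 0)) := by exact hA3.add hS4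
  have hS2 : Integrable (fun x : ℝ => (σ⁻¹ * (A * Q' + A' * Q) * ((1 + γ * x / σ) ^ (-(2/γ))) + (σ⁻¹ * (A * R' + A' * R) * ((1 + γ * x / σ) ^ (-(2/γ)) * Real.log (1 + γ * x / σ)) + (σ⁻¹ * (P * P') * ((1 + γ * x / σ) ^ (-(3/γ + 1))) + (σ⁻¹ * (P * Q' + Q * P') * ((1 + γ * x / σ) ^ (-(3/γ))) + (σ⁻¹ * (Q * Q') * ((1 + γ * x / σ) ^ (-(3/γ - 1))) + (σ⁻¹ * (P * R' + R * P') * ((1 + γ * x / σ) ^ (-(3/γ)) * Real.log (1 + γ * x / σ)) + (σ⁻¹ * (Q * R' + R * Q') * ((1 + γ * x / σ) ^ (-(3/γ - 1)) * Real.log (1 + γ * x / σ)) + σ⁻¹ * (R * R') * ((1 + γ * x / σ) ^ (-(3/γ - 1)) * Real.log (1 + γ * x / σ) ^ 2))))))))) (volume.restrict (Set.Ioi 0)) := by exact hA2.add hS3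
  have hS1 : Integrable (fun x : ℝ => (σ⁻¹ * (A * P' + A' * P) * ((1 + γ * x / σ) ^ (-(2/γ + 1))) + (σ⁻¹ * (A * Q' + A' * Q) * ((1 + γ * x / σ) ^ (-(2/γ))) + (σ⁻¹ * (A * R' + A' * R) * ((1 + γ * x / σ) ^ (-(2/γ)) * Real.log (1 + γ * x / σ)) + (σ⁻¹ * (P * P') * ((1 + γ * x / σ) ^ (-(3/γ + 1))) + (σ⁻¹ * (P * Q' + Q * P') * ((1 + γ * x / σ) ^ (-(3/γ))) + (σ⁻¹ * (Q * Q') * ((1 + γ * x / σ) ^ (-(3/γ - 1))) + (σ⁻¹ * (P * R' + R * P') * ((1 + γ * x / σ) ^ (-(3/γ)) * Real.log (1 + γ * x / σ)) + (σ⁻¹ * (Q * R' + R * Q') * ((1 + γ * x / σ) ^ (-(3/γ - 1)) * Real.log (1 + γ * x / σ)) + σ⁻¹ * (R * R') * ((1 + γ * x / σ) ^ (-(3/γ - 1)) * Real.log (1 + γ * x / σ) ^ 2)))))))))) (volume.restrict (Set.Ioi 0)) := by exact hA1.add hS2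
  rw [integral_add hA0 hS1, integral_add hA1 hS2, integral_add hA2 hS3, integral_add hA3 hS4, integral_add hA4 hS5, integral_add hA5 hS6, integral_add hA6 hS7, integral_add hA7 hS8, integral_add hA8 hS9]
  simp only [integral_const_mul]
  rw [v0, v1, v2, v3, v4, v5, v6, v7, v8, v9]
  have hγne : γ ≠ 0 := hγ0.ne'
  have hσne : σ ≠ 0 := hσ.ne'
  have h2' : 2 - γ ≠ 0 := by intro h; linarith
  have h3' : 3 - γ ≠ 0 := by intro h; linarith
  have h32 : 3 - 2 * γ ≠ 0 := by intro h; linarith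
  rw [
    show σ⁻¹ * (A * A') * (σ / (γ * ((1/γ + 1) - 1))) = A * A' by rw [show (1/γ + 1) - 1 = 1/γ by ring]; field_simp,
    show σ⁻¹ * (A * P' + A' * P) * (σ / (γ * ((2/γ + 1) - 1))) = (A * P' + A' * P) / 2 by rw [show (2/γ + 1) - 1 = 2/γ by ring]; field_simp,
    show σ⁻¹ * (A * Q' + A' * Q) * (σ / (γ * ((2/γ) - 1))) = (A * Q' + A' * Q) / (2 - γ) by rw [show (2/γ) - 1 = (2 - γ)/γ by field_simp]; field_simp,
    show σ⁻¹ * (A * R' + A' * R) * (σ / (γ * ((2/γ) - 1) ^ 2)) = (A * R' + A' * R) * γ / (2 - γ) ^ 2 by rw [show (2/γ) - 1 = (2 - γ)/γ by field_simp]; field_simp,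
    show σ⁻¹ * (P * P') * (σ / (γ * ((3/γ + 1) - 1))) = P * P' / 3 by rw [show (3/γ + 1) - 1 = 3/γ by ring]; field_simp,
    show σ⁻¹ * (P * Q' + Q * P') * (σ / (γ * ((3/γ) - 1))) = (P * Q' + Q * P') / (3 - γ) by rw [show (3/γ) - 1 = (3 - γ)/γ by field_simp]; field_simp,
    show σ⁻¹ * (Q * Q') * (σ / (γ * ((3/γ - 1) - 1))) = Q * Q' / (3 - 2 * γ) by rw [show (3/γ - 1) - 1 = (3 - 2 * γ)/γ by field_simp; ring]; field_simp,
    show σ⁻¹ * (P * R' + R * P') * (σ / (γ * ((3/γ) - 1) ^ 2)) = (P * R' + R * P') * γ / (3 - γ) ^ 2 by rw [show (3/γ) - 1 = (3 - γ)/γ by field_simp]; field_simp,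
    show σ⁻¹ * (Q * R' + R * Q') * (σ / (γ * ((3/γ - 1) - 1) ^ 2)) = (Q * R' + R * Q') * γ / (3 - 2 * γ) ^ 2 by rw [show (3/γ - 1) - 1 = (3 - 2 * γ)/γ by field_simp; ring]; field_simp,
    show σ⁻¹ * (R * R') * (2 * σ / (γ * ((3/γ - 1) - 1) ^ 3)) = R * R' * (2 * γ ^ 2) / (3 - 2 * γ) ^ 3 by rw [show (3/γ - 1) - 1 = (3 - 2 * γ)/γ by field_simp; ring]; field_simp]
  ring



set_option maxHeartbeats 4000000 in
/-- second moments of the estimating function ψ under GPD(γ,σ). -/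
theorem psi_second_moments (γ : ℝ) (hγ : γ ∈ Set.Ioo (0 : ℝ) 1) (σ : ℝ) (hσ : 0 < σ) :
    (∫ x in Set.Ioi (0 : ℝ), psiGamma γ σ x ^ 2 * gpdPdf γ σ x
      = (8 * γ ^ 5 - 148 * γ ^ 4 + 918 * γ ^ 3 - 2587 * γ ^ 2 + 3416 * γ - 1719) * σ ^ 2 /
          (12 * (γ - 3) ^ 2 * (γ - 2) ^ 4 * (2 * γ - 3) ^ 3)) ∧
    (∫ x in Set.Ioi (0 : ℝ), psiGamma γ σ x * psiSigma γ σ x * gpdPdf γ σ x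
      = (γ * (γ * (-4 * (γ - 15) * γ - 285) + 548) - 369) * σ /
          (12 * (γ - 2) ^ 3 * (2 * γ ^ 2 - 9 * γ + 9) ^ 2)) ∧
    (∫ x in Set.Ioi (0 : ℝ), psiSigma γ σ x ^ 2 * gpdPdf γ σ x
      = (γ * (2 * γ - 17) + 29) / (12 * (γ - 3) * (γ - 2) ^ 2 * (2 * γ - 3))) := by
  obtain ⟨hγ0, hγ1⟩ := hγ
  have hγne : γ ≠ 0 := hγ0.ne'
  have hσne : σ ≠ 0 := hσ.ne'
  have h1 : γ - 1 ≠ 0 := by intro h; linarith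
  have h2 : γ - 2 ≠ 0 := by intro h; linarith
  have h3 : γ - 3 ≠ 0 := by intro h; linarith
  have h2' : 2 - γ ≠ 0 := by intro h; linarith
  have h3' : 3 - γ ≠ 0 := by intro h; linarith
  have h32 : 3 - 2 * γ ≠ 0 := by intro h; linarith
  have h23 : 2 * γ - 3 ≠ 0 := by intro h; linarith
  have hq : 2 * γ ^ 2 - 9 * γ + 9 ≠ 0 := by nlinarith [sq_nonneg γ]
  have heq0 : Set.EqOn (fun x : ℝ => psiGamma γ σ x ^ 2 * gpdPdf γ σ x)
      (fun x : ℝ => (((σ / (2 * (γ - 2) ^ 2) - σ / (γ - 1) ^ 2) + (1 + γ * x / σ) ^ (-(1/γ)) * ((σ / γ ^ 2) + (σ * (2 * γ - 1) / ((γ - 1) ^ 2 * γ ^ 2)) * (1 + γ * x / σ) + (-(σ / ((γ - 1) * γ ^ 2))) * (1 + γ * x / σ) * Real.log (1 + γ * x / σ))) * ((σ / (2 * (γ - 2) ^ 2) - σ / (γ - 1) ^ 2) + (1 + γ * x / σ) ^ (-(1/γ)) * ((σ / γ ^ 2) + (σ * (2 * γ - 1) / ((γ - 1) ^ 2 * γ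 ^ 2)) * (1 + γ * x / σ) + (-(σ / ((γ - 1) * γ ^ 2))) * (1 + γ * x / σ) * Real.log (1 + γ * x / σ))) * (σ⁻¹ * (1 + γ * x / σ) ^ (-(1/γ) - 1)))) (Set.Ioi 0) := by
    intro x hx
    have hx0 : (0:ℝ) ≤ x := le_of_lt hx
    have ht : 0 < 1 + γ * x / σ := Tpos hγ0 hσ hx0
    have key2 : (σ / (σ + γ * x)) ^ ((1:ℝ)/γ) = (1 + γ * x / σ) ^ (-(1/γ)) := by
      rw [show σ / (σ + γ * x) = (1 + γ * x / σ)⁻¹ by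
          rw [show (1 + γ * x / σ : ℝ) = (σ + γ * x)/σ by field_simp, inv_div],
        Real.inv_rpow ht.le, ← Real.rpow_neg ht.le]
    simp only [psiGamma, gpdPdf]
    rw [key2, show (-1/γ - 1 : ℝ) = -(1/γ) - 1 by ring]
    generalize (1 + γ * x / σ : ℝ) ^ (-(1/γ)) = V
    field_simp
    ring
  have heq1 : Set.EqOn (fun x : ℝ => psiGamma γ σ x * psiSigma γ σ x * gpdPdf γ σ x)
      (fun x : ℝ => (((σ / (2 * (γ - 2) ^ 2) - σ / (γ - 1) ^ 2) + (1 + γ * x / σ) ^ (-(1/γ)) * ((σ / γ ^ 2) + (σ * (2 * γ - 1) / ((γ - 1) ^ 2 * γ ^ 2)) * (1 + γ * x / σ) + (-(σ / ((γ - 1) * γ ^ 2))) * (1 + γ * x / σ) * Real.log (1 + γ * x / σ))) * ((-(1 / (2 * (γ - 2))) + 1 / (γ - 1)) + (1 + γ * x / σ) ^ (-(1/γ)) * ((-(1 / γ)) + (-(1 / ((γ - 1) * γ))) * (1 + γ * x / σ) + ((0:ℝ)) * (1 + γ * x / σ) * Real.log (1 + γ * x / σ))) * (σ⁻¹ * (1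 + γ * x / σ) ^ (-(1/γ) - 1)))) (Set.Ioi 0) := by
    intro x hx
    have hx0 : (0:ℝ) ≤ x := le_of_lt hx
    have ht : 0 < 1 + γ * x / σ := Tpos hγ0 hσ hx0
    have key2 : (σ / (σ + γ * x)) ^ ((1:ℝ)/γ) = (1 + γ * x / σ) ^ (-(1/γ)) := by
      rw [show σ / (σ + γ * x) = (1 + γ * x / σ)⁻¹ by
          rw [show (1 + γ * x / σ : ℝ) = (σ + γ * x)/σ by field_simp, inv_div],
        Real.inv_rpow ht.le, ← Real.rpow_neg ht.le]
    simp only [psiGamma, psiSigma, gpdPdf]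
    rw [key2, show (-1/γ - 1 : ℝ) = -(1/γ) - 1 by ring]
    generalize (1 + γ * x / σ : ℝ) ^ (-(1/γ)) = V
    field_simp
    ring
  have heq2 : Set.EqOn (fun x : ℝ => psiSigma γ σ x ^ 2 * gpdPdf γ σ x)
      (fun x : ℝ => (((-(1 / (2 * (γ - 2))) + 1 / (γ - 1)) + (1 + γ * x / σ) ^ (-(1/γ)) * ((-(1 / γ)) + (-(1 / ((γ - 1) * γ))) * (1 + γ * x / σ) + ((0:ℝ)) * (1 + γ * x / σ) * Real.log (1 + γ * x / σ))) * ((-(1 / (2 * (γ - 2))) + 1 / (γ - 1)) + (1 + γ * x / σ) ^ (-(1/γ)) * ((-(1 / γ)) + (-(1 / ((γ - 1) * γ))) * (1 + γ * x / σ) + ((0:ℝ)) * (1 + γ * x / σ) * Real.log (1 + γ * x / σ))) * (σ⁻¹ * (1 + γ * x / σ) ^ (-(1/γ) - 1)))) (Set.Ioi 0) := by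
    intro x hx
    have hx0 : (0:ℝ) ≤ x := le_of_lt hx
    have ht : 0 < 1 + γ * x / σ := Tpos hγ0 hσ hx0
    have key2 : (σ / (σ + γ * x)) ^ ((1:ℝ)/γ) = (1 + γ * x / σ) ^ (-(1/γ)) := by
      rw [show σ / (σ + γ * x) = (1 + γ * x / σ)⁻¹ by
          rw [show (1 + γ * x / σ : ℝ) = (σ + γ * x)/σ by field_simp, inv_div],
        Real.inv_rpow ht.le, ← Real.rpow_neg ht.le]
    simp only [psiSigma, gpdPdf]
    rw [key2, show (-1/γ - 1 : ℝ) = -(1/γ) - 1 by ring]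
    generalize (1 + γ * x / σ : ℝ) ^ (-(1/γ)) = V
    field_simp
    ring
  refine ⟨?_, ?_, ?_⟩
  · rw [setIntegral_congr_fun measurableSet_Ioi heq0, master hγ0 hγ1 hσ]
    field_simp
    ring
  · rw [setIntegral_congr_fun measurableSet_Ioi heq1, master hγ0 hγ1 hσ]
    rw [show 2 * γ ^ 2 - 9 * γ + 9 = (2 * γ - 3) * (γ - 3) by ring]
    field_simp
    ring
  · rw [setIntegral_congr_fun measurableSet_Ioi heq2, master hγ0 hγ1 hσ]
    field_simp
    ring
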